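/- Rodrigues formula: for every n ∈ ℕ and x ≠ 0, eₙ(x) = x^{n+1} e^{−x} · (dⁿ/dxⁿ)(x^{−1} eˣ). -/

import Mathlib

noncomputable def e (n : ℕ) (x : ℝ) : ℝ :=
  ∑ l ∈ Finset.range (n + 1), (-1 : ℝ) ^ (n + l) * ((n.factorial : ℝ) / (l.factorial : ℝ)) * x ^ l

noncomputable def p (n : ℕ) (y : ℝ) : ℝ :=
  ∑ l ∈ Finset.range (n + 1),
    (-1 : ℝ) ^ (n + l) * ((n.factorial : ℝ) / (l.factorial : ℝ)) * y ^ ((l : ℤ) - (n + 1))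

lemma p_hasDerivAt (n : ℕ) (x : ℝ) (hx : x ≠ 0) :
    HasDerivAt (p n)
      (∑ l ∈ Finset.range (n + 1),
        (-1 : ℝ) ^ (n + l) * ((n.factorial : ℝ) / (l.factorial : ℝ)) *
          (((l : ℤ) - (n + 1)) * x ^ ((l : ℤ) - (n + 1) - 1))) x := by
  unfold p
  apply HasDerivAt.fun_sum
  intro l _
  have := (hasDerivAt_zpow ((l : ℤ) - (n + 1)) x (Or.inl hx)).const_mul
    ((-1 : ℝ) ^ (n + l) * ((n.factorial : ℝ) / (l.factorial : ℝ)))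
  convert this using 2
  · rfl
  · push_cast
    ring

lemma key_sum (n : ℕ) (x : ℝ) (hx : x ≠ 0) :
    p n x + (∑ l ∈ Finset.range (n + 1),
        (-1 : ℝ) ^ (n + l) * ((n.factorial : ℝ) / (l.factorial : ℝ)) *
          (((l : ℤ) - (n + 1)) * x ^ ((l : ℤ) - (n + 1) - 1))) = p (n + 1) x := by
  have hfac : ∀ l : ℕ, (l.factorial : ℝ) ≠ 0 := fun l => Nat.cast_ne_zero.mpr l.factorial_ne_zero
  set F : ℕ → ℝ := fun l =>
    (-1 : ℝ) ^ (n + l) * ((n.factorial : ℝ) * ((l : ℝ) - (n + 1)) / (l.factorial : ℝ)) *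
      x ^ ((l : ℤ) - (n + 2)) with hF
  have htel : ∑ l ∈ Finset.range (n + 1), (F l - F (l + 1)) = F 0 - F (n + 1) :=
    Finset.sum_range_sub' F (n + 1)
  have hFtop : F (n + 1) = 0 := by simp [hF]
  have hp1 : p (n + 1) x
      = (∑ l ∈ Finset.range (n + 1),
          (-1 : ℝ) ^ (n + 1 + (l + 1)) * (((n + 1).factorial : ℝ) / ((l + 1).factorial : ℝ)) *
            x ^ (((l + 1 : ℕ) : ℤ) - ((n + 1 : ℕ) + 1))) +
        (-1 : ℝ) ^ (n + 1 + 0) * (((n + 1).factorial : ℝ) / ((0 : ℕ).factorial : ℝ)) *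
          x ^ (((0 : ℕ) : ℤ) - ((n + 1 : ℕ) + 1)) := by
    unfold p
    exact Finset.sum_range_succ' _ _
  have hF0 : F 0 = (-1 : ℝ) ^ (n + 1 + 0) * (((n + 1).factorial : ℝ) / ((0 : ℕ).factorial : ℝ)) *
      x ^ (((0 : ℕ) : ℤ) - ((n + 1 : ℕ) + 1)) := by
    simp only [hF]
    have he : ((0 : ℕ) : ℤ) - ((n + 1 : ℕ) + 1) = (0 : ℤ) - (n + 2) := by push_cast; ring
    rw [he, pow_succ]
    push_cast [Nat.factorial_succ]
    ring_nf
  rw [hp1, ← hF0,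
    show F 0 = ∑ l ∈ Finset.range (n + 1), (F l - F (l + 1)) by rw [htel, hFtop, sub_zero]]
  unfold p
  rw [← Finset.sum_add_distrib, ← Finset.sum_add_distrib]
  refine Finset.sum_congr rfl fun l hl => ?_
  have e1 : ((l + 1 : ℕ) : ℤ) - ((n + 1 : ℕ) + 1) = (l : ℤ) - (n + 1) := by push_cast; ring
  have e2 : ((l : ℤ) - (n + 1) - 1) = (l : ℤ) - (n + 2) := by ring
  have e3 : (((l + 1 : ℕ) : ℤ) - (n + 2)) = ((l : ℤ) - (n + 2)) + 1 := by push_cast; ring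
  have hxA : x ^ ((l : ℤ) - (n + 1)) = x ^ ((l : ℤ) - (n + 2)) * x := by
    rw [show (l : ℤ) - (n + 1) = ((l : ℤ) - (n + 2)) + 1 by ring, zpow_add_one₀ hx]
  simp only [hF]
  rw [e1, e2, e3, zpow_add_one₀ hx, hxA]
  have s1 : ((-1 : ℝ)) ^ (n + 1 + (l + 1)) = (-1) ^ (n + l) := by
    rw [show n + 1 + (l + 1) = (n + l) + 2 by ring, pow_add]; norm_num
  have s2 : ((-1 : ℝ)) ^ (n + (l + 1)) = -(-1) ^ (n + l) := by
    rw [show n + (l + 1) = (n + l) + 1 by ring, pow_succ]; ring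
  rw [s1, s2]
  push_cast [Nat.factorial_succ]
  field_simp
  ring

lemma iter_eq (n : ℕ) : ∀ x : ℝ, x ≠ 0 →
    iteratedDeriv n (fun y => y⁻¹ * Real.exp y) x = Real.exp x * p n x := by
  induction n with
  | zero =>
    intro x hx
    rw [iteratedDeriv_zero]
    simp only [p, Finset.sum_range_one]
    norm_num
    ring
  | succ n ih =>
    intro x hx
    rw [iteratedDeriv_succ]
    have hev : iteratedDeriv n (fun y => y⁻¹ * Real.exp y) =ᶠ[nhds x]
        fun y => Real.exp y * p n y :=
      Filter.eventually_of_mem (isOpen_compl_singleton.mem_nhds hx) fun y hy => ih y hy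
    rw [hev.deriv_eq]
    have hg := ((Real.hasDerivAt_exp x).fun_mul (p_hasDerivAt n x hx)).deriv
    rw [hg, ← mul_add, key_sum n x hx]

theorem stmt5 (n : ℕ) (x : ℝ) (hx : x ≠ 0) :
    e n x = x ^ (n + 1) * Real.exp (-x) *
      iteratedDeriv n (fun y => y⁻¹ * Real.exp y) x := by
  rw [iter_eq n x hx]
  have hexp : Real.exp (-x) * Real.exp x = 1 := by rw [← Real.exp_add]; simp
  have : x ^ (n + 1) * Real.exp (-x) * (Real.exp x * p n x)
      = x ^ (n + 1) * p n x := by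
    rw [show x ^ (n + 1) * Real.exp (-x) * (Real.exp x * p n x)
        = x ^ (n + 1) * p n x * (Real.exp (-x) * Real.exp x) by ring, hexp, mul_one]
  rw [this]
  unfold e p
  rw [Finset.mul_sum]
  refine Finset.sum_congr rfl fun l hl => ?_
  have hz : x ^ (n + 1) * x ^ ((l : ℤ) - (n + 1)) = x ^ l := by
    rw [← zpow_natCast x (n + 1), ← zpow_add₀ hx, ← zpow_natCast x l]
    congr 1
    push_cast
    ring
  rw [← hz]
  ring
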